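/- arXiv:1811.05193 — 2 statements merged into one kernel-verified Lean document; each statement's English description precedes it below -/
import Mathlib

section
/- Rippa's LOOCV identity: let A be the (invertible, symmetric positive definite) kernel interpolation matrix for distinct centers x₁,…,x_N and data vector f, and let α = A⁻¹ f. For each k, let R^{(k)} be the kernel interpolant built on the N−1 points {x_i : i ≠ k} with data {f_i : i ≠ k}. Then the leave-one-out error at x_k satisfies f_k − R^{(k)}(x_k) = α_k / (A⁻¹)_{kk}. -/
/-- Rippa's LOOCV identity: with A the SPD kernel matrix, α the
full interpolation coefficients, and R^{(k)} the interpolant dropping point k,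
the leave-one-out error at x_k is f_k − R^{(k)}(x_k) = α_k / (A⁻¹)_{kk}. -/
theorem rippa_loocv_identity
    {M N : ℕ} (Φ : EuclideanSpace ℝ (Fin M) → EuclideanSpace ℝ (Fin M) → ℝ)
    (x : Fin N → EuclideanSpace ℝ (Fin M)) (hinj : Function.Injective x)
    (A : Matrix (Fin N) (Fin N) ℝ)
    (hA : ∀ i k, A i k = Φ (x i) (x k)) (hpd : A.PosDef)
    (f α : Fin N → ℝ) (hα : A.mulVec α = f)
    (k : Fin N) (β : {i : Fin N // i ≠ k} → ℝ)
    (hβ : ∀ i : {i : Fin N // i ≠ k},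
      ∑ j : {i : Fin N // i ≠ k}, β j * Φ (x i.1) (x j.1) = f i.1) :
    f k - ∑ j : {i : Fin N // i ≠ k}, β j * Φ (x k) (x j.1)
      = α k / (A⁻¹ k k) := by
  classical
  -- extend β by 0 at k
  set v : Fin N → ℝ := fun i => if h : i = k then 0 else β ⟨i, h⟩ with hv
  have hAv : ∀ i, A.mulVec v i = ∑ j : {i : Fin N // i ≠ k}, β j * Φ (x i) (x j.1) := by
    intro i
    have hsub : ∑ j ∈ Finset.univ.erase k, A i j * v j
        = ∑ j : {j : Fin N // j ≠ k}, A i j.1 * v j.1 := by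
      apply Finset.sum_subtype
      intro j; simp
    calc A.mulVec v i = ∑ j, A i j * v j := by
          simp [Matrix.mulVec, dotProduct]
      _ = A i k * v k + ∑ j ∈ Finset.univ.erase k, A i j * v j := by
          rw [← Finset.add_sum_erase _ _ (Finset.mem_univ k)]
      _ = ∑ j : {j : Fin N // j ≠ k}, A i j.1 * v j.1 := by
          rw [hsub]; simp [hv]
      _ = ∑ j : {j : Fin N // j ≠ k}, β j * Φ (x i) (x j.1) := by
          apply Finset.sum_congr rfl
          intro j _
          rw [hA, hv]
          simp [j.2, mul_comm]
  -- residual vector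
  set g : Fin N → ℝ := fun i => f i - A.mulVec v i with hg
  have hg0 : ∀ i, i ≠ k → g i = 0 := by
    intro i hi
    simp only [hg]
    rw [hAv i, hβ ⟨i, hi⟩, sub_self]
  -- invertibility
  have hU : IsUnit A.det := hpd.det_pos.ne'.isUnit
  have hinvA : A⁻¹ * A = 1 := Matrix.nonsing_inv_mul A hU
  have hAinv : A * A⁻¹ = 1 := Matrix.mul_nonsing_inv A hU
  -- α = v + A⁻¹ g
  have hαv : α = v + A⁻¹.mulVec g := by
    have h1 : A.mulVec (v + A⁻¹.mulVec g) = f := by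
      rw [Matrix.mulVec_add, Matrix.mulVec_mulVec, hAinv, Matrix.one_mulVec]
      funext i
      simp [hg]
    have h2 : A⁻¹.mulVec (A.mulVec α) = A⁻¹.mulVec (A.mulVec (v + A⁻¹.mulVec g)) := by
      rw [hα, h1]
    rwa [Matrix.mulVec_mulVec, Matrix.mulVec_mulVec, hinvA, Matrix.one_mulVec,
      Matrix.one_mulVec] at h2
  -- α k = A⁻¹ k k * g k
  have hαk : α k = A⁻¹ k k * g k := by
    have : α k = v k + ∑ j, A⁻¹ k j * g j := by
      rw [hαv]; simp [Matrix.mulVec, dotProduct]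
    rw [this]
    have hvk : v k = 0 := by simp [hv]
    rw [hvk, zero_add]
    rw [Finset.sum_eq_single k]
    · intro j _ hj; rw [hg0 j hj, mul_zero]
    · intro h; exact absurd (Finset.mem_univ k) h
  -- A⁻¹ k k > 0
  have hpos : 0 < A⁻¹ k k := by
    have h := hpd.inv.dotProduct_mulVec_pos (x := (Pi.single k 1 : Fin N → ℝ)) (by
      intro h
      have := congrFun h k
      simp at this)
    have heq : dotProduct (star (Pi.single k 1 : Fin N → ℝ))
        (A⁻¹.mulVec (Pi.single k 1 : Fin N → ℝ)) = A⁻¹ k k := by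
      simp [Matrix.mulVec_single, dotProduct, Pi.single_apply, ite_mul]
    rwa [heq] at h
  -- conclude
  have hgk : g k = f k - ∑ j : {i : Fin N // i ≠ k}, β j * Φ (x k) (x j.1) := by
    simp only [hg]; rw [hAv k]
  rw [← hgk, hαk, mul_comm, mul_div_assoc, div_self hpos.ne', mul_one]
end

section
/- The inverse multiquadric φ(r) = (1 + ε²r²)^{−1/2} with ε > 0 defines a strictly positive definite kernel Φ(x,y) = φ(‖x−y‖₂) on ℝ^M for every M ≥ 1. -/
open Finset MeasureTheory Set Filter Topology in
lemma imq_normsq_eq {M : ℕ} (u : EuclideanSpace ℝ (Fin M)) : ‖u‖^2 = ∑ j, (u j)^2 := by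
  rw [EuclideanSpace.norm_eq, Real.sq_sqrt (by positivity)]
  simp [Real.norm_eq_abs, sq_abs]

lemma imq_sumB {N M n : ℕ} (d : Fin N → ℝ) (y : Fin N → Fin M → ℝ) :
    0 ≤ ∑ i, ∑ k, d i * d k * (∑ j, y i j * y k j) ^ n := by
  have key : ∀ i k : Fin N, (∑ j, y i j * y k j) ^ n
      = ∑ p ∈ Fintype.piFinset (fun _ : Fin n => (Finset.univ : Finset (Fin M))),
          (∏ t, y i (p t)) * (∏ t, y k (p t)) := by
    intro i k
    rw [Finset.sum_pow' Finset.univ (fun j => y i j * y k j) n]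
    exact Finset.sum_congr rfl fun p _ => by rw [Finset.prod_mul_distrib]
  have h3 : ∀ p : Fin n → Fin M, (∑ i, d i * ∏ t, y i (p t)) ^ 2
      = ∑ i, ∑ k, d i * d k * ((∏ t, y i (p t)) * (∏ t, y k (p t))) := by
    intro p
    rw [sq, Finset.sum_mul_sum]
    exact Finset.sum_congr rfl fun i _ => Finset.sum_congr rfl fun k _ => by ring
  have h2 : ∑ i, ∑ k, d i * d k * (∑ j, y i j * y k j) ^ n
      = ∑ p ∈ Fintype.piFinset (fun _ : Fin n => (Finset.univ : Finset (Fin M))),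
          (∑ i, d i * ∏ t, y i (p t)) ^ 2 := by
    simp_rw [key, Finset.mul_sum, h3]
    rw [show (∑ i, ∑ k, ∑ p ∈ Fintype.piFinset (fun _ : Fin n => (Finset.univ : Finset (Fin M))),
        d i * d k * ((∏ t, y i (p t)) * (∏ t, y k (p t))))
      = ∑ p ∈ Fintype.piFinset (fun _ : Fin n => (Finset.univ : Finset (Fin M))),
        ∑ i, ∑ k, d i * d k * ((∏ t, y i (p t)) * (∏ t, y k (p t))) from
      (Finset.sum_congr rfl fun i _ => Finset.sum_comm).trans Finset.sum_comm]
  rw [h2]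
  exact Finset.sum_nonneg fun p _ => sq_nonneg _

lemma imq_gauss_pd {M N : ℕ} (x : Fin N → EuclideanSpace ℝ (Fin M)) (c : Fin N → ℝ)
    {a : ℝ} (ha : 0 ≤ a) :
    0 ≤ ∑ i, ∑ k, c i * c k * Real.exp (-(a * ‖x i - x k‖ ^ 2)) := by
  set B : Fin N → Fin N → ℝ := fun i k => ∑ j, x i j * x k j with hB
  have hnorm : ∀ i k, ‖x i - x k‖ ^ 2 = B i i - 2 * B i k + B k k := by
    intro i k
    rw [imq_normsq_eq]
    have : ∀ j : Fin M, ((x i - x k) j) ^ 2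
        = x i j * x i j - 2 * (x i j * x k j) + x k j * x k j := by
      intro j
      have : (x i - x k) j = x i j - x k j := by simp
      rw [this]; ring
    simp_rw [this]
    rw [Finset.sum_add_distrib, Finset.sum_sub_distrib, ← Finset.mul_sum]
  set d : Fin N → ℝ := fun i => c i * Real.exp (-(a * B i i)) with hd
  have hexp : ∀ i k, c i * c k * Real.exp (-(a * ‖x i - x k‖ ^ 2))
      = d i * d k * Real.exp (2 * a * B i k) := by
    intro i k
    rw [hnorm]
    have : -(a * (B i i - 2 * B i k + B k k))
        = -(a * B i i) + (-(a * B k k)) + 2 * a * B i k := by ring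
    rw [this, Real.exp_add, Real.exp_add, hd]
    ring
  simp_rw [hexp]
  have series : ∀ i k, Real.exp (2 * a * B i k)
      = ∑' n : ℕ, (2 * a * B i k) ^ n / (n.factorial : ℝ) := by
    intro i k
    rw [Real.exp_eq_exp_ℝ, NormedSpace.exp_eq_tsum_div]
  simp_rw [series, ← tsum_mul_left]
  have hsm : ∀ i k : Fin N, Summable (fun n : ℕ => d i * d k * ((2 * a * B i k) ^ n / (n.factorial : ℝ))) :=
    fun i k => (Real.summable_pow_div_factorial _).mul_left _
  have swap : ∑ i, ∑ k, ∑' n : ℕ, d i * d k * ((2 * a * B i k) ^ n / (n.factorial : ℝ))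
      = ∑' n : ℕ, ∑ i, ∑ k, d i * d k * ((2 * a * B i k) ^ n / (n.factorial : ℝ)) := by
    calc ∑ i, ∑ k, ∑' n : ℕ, d i * d k * ((2 * a * B i k) ^ n / (n.factorial : ℝ))
        = ∑ i, ∑' n : ℕ, ∑ k, d i * d k * ((2 * a * B i k) ^ n / (n.factorial : ℝ)) :=
          Finset.sum_congr rfl fun i _ => (Summable.tsum_finsetSum fun k _ => hsm i k).symm
      _ = ∑' n : ℕ, ∑ i, ∑ k, d i * d k * ((2 * a * B i k) ^ n / (n.factorial : ℝ)) :=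
          (Summable.tsum_finsetSum fun i _ => summable_sum fun k _ => hsm i k).symm
  rw [swap]
  refine tsum_nonneg fun n => ?_
  have : ∀ i k : Fin N, d i * d k * ((2 * a * B i k) ^ n / (n.factorial : ℝ))
      = ((2 * a) ^ n / (n.factorial : ℝ)) * (d i * d k * (B i k) ^ n) := by
    intro i k; rw [mul_pow]; ring
  simp_rw [this, ← Finset.mul_sum]
  exact mul_nonneg (div_nonneg (pow_nonneg (by linarith) n) (by positivity))
    (imq_sumB d (fun i j => x i j))

open MeasureTheory Set in
lemma imq_int_rep (s : ℝ) (hs : 0 ≤ s) :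
    (1 + s) ^ (-(1/2 : ℝ))
      = ∫ t in Ioi (0:ℝ), (2 / Real.sqrt Real.pi) * Real.exp (-(1 + s) * t ^ 2) := by
  have h1 : (0:ℝ) < 1 + s := by linarith
  rw [MeasureTheory.integral_const_mul, integral_gaussian_Ioi,
    Real.sqrt_div Real.pi_pos.le, Real.rpow_neg h1.le, ← Real.sqrt_eq_rpow]
  have hπ : Real.sqrt Real.pi > 0 := Real.sqrt_pos.mpr Real.pi_pos
  have h2 : Real.sqrt (1 + s) > 0 := Real.sqrt_pos.mpr h1
  field_simp

open MeasureTheory Set Filter Topology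


/-- the inverse multiquadric φ(r) = (1+ε²r²)^{−1/2}, ε > 0,
defines a strictly positive definite kernel Φ(x,y) = φ(‖x−y‖) on ℝ^M for
every M ≥ 1. -/
theorem inverse_multiquadric_strictly_posDef
    {M : ℕ} (hM : 1 ≤ M) (ε : ℝ) (hε : 0 < ε) :
    ∀ (N : ℕ) (x : Fin N → EuclideanSpace ℝ (Fin M)),
      Function.Injective x → ∀ c : Fin N → ℝ, c ≠ 0 →
      0 < ∑ i, ∑ k, c i * c k *
        (1 + ε ^ 2 * ‖x i - x k‖ ^ 2) ^ (-(1 / 2 : ℝ)) := by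
  intro N x hinj c hc
  set κ : ℝ := 2 / Real.sqrt Real.pi with hκ
  have hκpos : 0 < κ := by
    have := Real.sqrt_pos.mpr Real.pi_pos
    positivity
  set g : Fin N → Fin N → ℝ → ℝ :=
    fun i k t => c i * c k * (κ * Real.exp (-(1 + ε ^ 2 * ‖x i - x k‖ ^ 2) * t ^ 2)) with hg
  have key : ∀ i k : Fin N,
      c i * c k * (1 + ε ^ 2 * ‖x i - x k‖ ^ 2) ^ (-(1 / 2 : ℝ))
        = ∫ t in Ioi (0:ℝ), g i k t := by
    intro i k
    rw [hg]
    rw [MeasureTheory.integral_const_mul, ← imq_int_rep _ (by positivity)]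
  have hInt : ∀ i k : Fin N, IntegrableOn (g i k) (Ioi (0:ℝ)) := by
    intro i k
    exact (((integrable_exp_neg_mul_sq (by positivity)).integrableOn).const_mul κ).const_mul _
  set F : ℝ → ℝ := fun t => ∑ i, ∑ k, g i k t with hF
  have swap : ∑ i, ∑ k, c i * c k * (1 + ε ^ 2 * ‖x i - x k‖ ^ 2) ^ (-(1 / 2 : ℝ))
      = ∫ t in Ioi (0:ℝ), F t := by
    simp_rw [key]
    rw [hF]
    rw [MeasureTheory.integral_finset_sum _
      (fun i _ => MeasureTheory.integrable_finset_sum _ (fun k _ => hInt i k))]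
    exact Finset.sum_congr rfl fun i _ =>
      (MeasureTheory.integral_finset_sum _ fun k _ => hInt i k).symm
  rw [swap]
  -- G and factorization
  set G : ℝ → ℝ :=
    fun t => ∑ i, ∑ k, c i * c k * Real.exp (-(ε ^ 2 * t ^ 2 * ‖x i - x k‖ ^ 2)) with hG
  have hFG : ∀ t : ℝ, F t = (κ * Real.exp (-(t ^ 2))) * G t := by
    intro t
    rw [hF, hG]
    simp_rw [Finset.mul_sum]
    refine Finset.sum_congr rfl fun i _ => Finset.sum_congr rfl fun k _ => ?_
    simp only [hg]
    have : -(1 + ε ^ 2 * ‖x i - x k‖ ^ 2) * t ^ 2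
        = -(t ^ 2) + -(ε ^ 2 * t ^ 2 * ‖x i - x k‖ ^ 2) := by ring
    rw [this, Real.exp_add]
    ring
  have hGnonneg : ∀ t : ℝ, 0 ≤ G t := fun t => imq_gauss_pd x c (by positivity)
  have hFnonneg : ∀ t : ℝ, 0 ≤ F t := by
    intro t
    rw [hFG]
    exact mul_nonneg (by positivity) (hGnonneg t)
  -- limit of G at infinity
  have hL : 0 < ∑ i, c i ^ 2 := by
    obtain ⟨i0, hi0⟩ := Function.ne_iff.mp hc
    exact Finset.sum_pos' (fun i _ => sq_nonneg _) ⟨i0, Finset.mem_univ _, sq_pos_of_ne_zero hi0⟩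
  have hGlim : Tendsto G atTop (𝓝 (∑ i, c i ^ 2)) := by
    have hLrw : (∑ i, c i ^ 2)
        = ∑ i, ∑ k, (if k = i then c i * c k else 0) := by
      refine Finset.sum_congr rfl fun i _ => ?_
      rw [Finset.sum_ite_eq' Finset.univ i (fun k => c i * c k)]
      simp [sq]
    rw [hG, hLrw]
    refine tendsto_finset_sum _ fun i _ => tendsto_finset_sum _ fun k _ => ?_
    by_cases hik : k = i
    · subst hik
      rw [if_pos rfl]
      have h0 : ‖x k - x k‖ ^ 2 = 0 := by simp
      simp only [h0, mul_zero, neg_zero, Real.exp_zero, mul_one]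
      exact tendsto_const_nhds
    · rw [if_neg hik]
      have hq : 0 < ‖x i - x k‖ ^ 2 := by
        have : x i ≠ x k := fun h => hik (hinj h).symm
        have h5 : x i - x k ≠ 0 := sub_ne_zero_of_ne this
        exact pow_pos (norm_pos_iff.mpr h5) 2
      have h1 : Tendsto (fun t : ℝ => -(ε ^ 2 * t ^ 2 * ‖x i - x k‖ ^ 2)) atTop atBot := by
        refine tendsto_neg_atBot_iff.mpr ?_
        have h2 : Tendsto (fun t : ℝ => t ^ 2) atTop atTop :=
          tendsto_pow_atTop (by norm_num)
        have h3 : Tendsto (fun t : ℝ => ε ^ 2 * t ^ 2) atTop atTop :=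
          Tendsto.const_mul_atTop (by positivity) h2
        exact Tendsto.atTop_mul_const hq h3
      have h4 : Tendsto (fun t : ℝ => Real.exp (-(ε ^ 2 * t ^ 2 * ‖x i - x k‖ ^ 2)))
          atTop (𝓝 0) := Real.tendsto_exp_atBot.comp h1
      have := h4.const_mul (c i * c k)
      simpa using this
  -- find t₀ > 0 with G t₀ > 0
  obtain ⟨t₀, ht₀G, ht₀pos⟩ :
      ∃ t₀ : ℝ, 0 < G t₀ ∧ 0 < t₀ := by
    have hev : ∀ᶠ t in atTop, 0 < G t := hGlim.eventually (eventually_gt_nhds hL)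
    obtain ⟨t₀, h1, h2⟩ := (hev.and (eventually_gt_atTop (0:ℝ))).exists
    exact ⟨t₀, h1, h2⟩
  have hFt₀ : 0 < F t₀ := by
    rw [hFG]
    exact mul_pos (by positivity) ht₀G
  -- integral positivity
  have hFint : IntegrableOn F (Ioi (0:ℝ)) :=
    MeasureTheory.integrable_finset_sum _
      (fun i _ => MeasureTheory.integrable_finset_sum _ (fun k _ => hInt i k))
  have hFcont : Continuous F := by
    rw [hF]
    refine continuous_finset_sum _ fun i _ => continuous_finset_sum _ fun k _ => ?_
    rw [hg]
    fun_prop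
  have hae : 0 ≤ᵐ[volume.restrict (Ioi (0:ℝ))] F := ae_of_all _ hFnonneg
  rw [MeasureTheory.setIntegral_pos_iff_support_of_nonneg_ae hae hFint]
  -- 0 < volume (support F ∩ Ioi 0)
  have hopen : IsOpen (F ⁻¹' Ioi 0) := isOpen_Ioi.preimage hFcont
  obtain ⟨δ, hδpos, hball⟩ := Metric.isOpen_iff.mp hopen t₀ hFt₀
  set r : ℝ := min δ t₀ with hr
  have hrpos : 0 < r := lt_min hδpos ht₀pos
  have hsub : Metric.ball t₀ r ⊆ Function.support F ∩ Ioi 0 := by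
    intro s hs
    have hs' : s ∈ Metric.ball t₀ δ := Metric.ball_subset_ball (min_le_left _ _) hs
    have hFs : 0 < F s := hball hs'
    constructor
    · exact fun h => absurd h (ne_of_gt hFs)
    · have : |s - t₀| < r := by
        rw [← Real.dist_eq]; exact hs
      have := abs_lt.mp this
      have : t₀ - r < s := by linarith [this.1]
      have hrt : r ≤ t₀ := min_le_right _ _
      simp only [mem_Ioi]
      linarith
  calc (0 : ENNReal) < volume (Metric.ball t₀ r) := Metric.measure_ball_pos _ _ hrpos
    _ ≤ volume (Function.support F ∩ Ioi 0) := measure_mono hsub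
end
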